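/- Let x, y, z be three distinct indices and let u, w, h be real-valued functions on ordered pairs of distinct indices from {x, y, z} satisfying: 0 ≤ u_{ab} ≤ 1 and u_{ab} + u_{ba} = 1 for all distinct a, b; u_{ab} + u_{bc} + u_{ca} ≥ 1 for all distinct a, b, c; w_{ab} ≥ 0 and w_{ab} + w_{bc} ≥ w_{ac} for all distinct a, b, c; h_{ab} ∈ {0,1}, h_{ab} + h_{ba} = 1, and h_{ab} = 1 implies u_{ab} ≥ 1/2, for all distinct a, b. Then ∑ h_{ac}·h_{cb}·w_{ba} ≤ 2·∑ h_{ac}·h_{cb}·(u_{ab}·w_{ba} + u_{ba}·w_{ab}), where both sums range over all six orderings (a, b, c) of the triple (x, y, z). -/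
import Mathlib


/-- Triple-wise rounding inequality for mmKT-Conv: for a feasible fractional
LP solution `u`, its `1/2`-threshold rounding `h`, and nonnegative weights `w`
satisfying the triangle inequality, the rounded cost summed over all six
orderings of a triple of distinct indices is at most twice the LP cost. -/
theorem triple_rounding_ineq {ι : Type*} (x y z : ι)
    (hxy : x ≠ y) (hxz : x ≠ z) (hyz : y ≠ z)
    (u w h : ι → ι → ℝ)
    (hu01 : ∀ a ∈ ({x, y, z} : Set ι), ∀ b ∈ ({x, y, z} : Set ι), a ≠ b →
      0 ≤ u a b ∧ u a b ≤ 1)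
    (hu_sum : ∀ a ∈ ({x, y, z} : Set ι), ∀ b ∈ ({x, y, z} : Set ι), a ≠ b →
      u a b + u b a = 1)
    (hu_tri : ∀ a ∈ ({x, y, z} : Set ι), ∀ b ∈ ({x, y, z} : Set ι),
      ∀ c ∈ ({x, y, z} : Set ι), a ≠ b → b ≠ c → a ≠ c →
      1 ≤ u a b + u b c + u c a)
    (hw0 : ∀ a ∈ ({x, y, z} : Set ι), ∀ b ∈ ({x, y, z} : Set ι), a ≠ b →
      0 ≤ w a b)
    (hw_tri : ∀ a ∈ ({x, y, z} : Set ι), ∀ b ∈ ({x, y, z} : Set ι),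
      ∀ c ∈ ({x, y, z} : Set ι), a ≠ b → b ≠ c → a ≠ c →
      w a c ≤ w a b + w b c)
    (hh01 : ∀ a ∈ ({x, y, z} : Set ι), ∀ b ∈ ({x, y, z} : Set ι), a ≠ b →
      h a b = 0 ∨ h a b = 1)
    (hh_sum : ∀ a ∈ ({x, y, z} : Set ι), ∀ b ∈ ({x, y, z} : Set ι), a ≠ b →
      h a b + h b a = 1)
    (hhu : ∀ a ∈ ({x, y, z} : Set ι), ∀ b ∈ ({x, y, z} : Set ι), a ≠ b →
      h a b = 1 → 1 / 2 ≤ u a b) :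
    h x z * h z y * w y x + h x y * h y z * w z x + h y z * h z x * w x y +
      h y x * h x z * w z y + h z y * h y x * w x z + h z x * h x y * w y z ≤
    2 * (h x z * h z y * (u x y * w y x + u y x * w x y) +
      h x y * h y z * (u x z * w z x + u z x * w x z) +
      h y z * h z x * (u y x * w x y + u x y * w y x) +
      h y x * h x z * (u y z * w z y + u z y * w y z) +
      h z y * h y x * (u z x * w x z + u x z * w z x) +
      h z x * h x y * (u z y * w y z + u y z * w z y)) := by
  have mx : x ∈ ({x, y, z} : Set ι) := by simp
  have my : y ∈ ({x, y, z} : Set ι) := by simp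
  have mz : z ∈ ({x, y, z} : Set ι) := by simp
  have hyx := hxy.symm
  have hzx := hxz.symm
  have hzy := hyz.symm
  obtain ⟨uxy0, uxy1⟩ := hu01 x mx y my hxy
  obtain ⟨uyx0, uyx1⟩ := hu01 y my x mx hyx
  obtain ⟨uxz0, uxz1⟩ := hu01 x mx z mz hxz
  obtain ⟨uzx0, uzx1⟩ := hu01 z mz x mx hzx
  obtain ⟨uyz0, uyz1⟩ := hu01 y my z mz hyz
  obtain ⟨uzy0, uzy1⟩ := hu01 z mz y my hzy
  have sxy := hu_sum x mx y my hxy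
  have sxz := hu_sum x mx z mz hxz
  have syz := hu_sum y my z mz hyz
  have t1 := hu_tri x mx y my z mz hxy hyz hxz
  have t2 := hu_tri x mx z mz y my hxz hzy hxy
  have wxy0 := hw0 x mx y my hxy
  have wyx0 := hw0 y my x mx hyx
  have wxz0 := hw0 x mx z mz hxz
  have wzx0 := hw0 z mz x mx hzx
  have wyz0 := hw0 y my z mz hyz
  have wzy0 := hw0 z mz y my hzy
  have w1 := hw_tri x mx y my z mz hxy hyz hxz
  have w2 := hw_tri x mx z mz y my hxz hzy hxy
  have w3 := hw_tri y my x mx z mz hyx hxz hyz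
  have w4 := hw_tri y my z mz x mx hyz hzx hyx
  have w5 := hw_tri z mz x mx y my hzx hxy hzy
  have w6 := hw_tri z mz y my x mx hzy hyx hzx
  have huxy := hhu x mx y my hxy
  have huyx := hhu y my x mx hyx
  have huxz := hhu x mx z mz hxz
  have huzx := hhu z mz x mx hzx
  have huyz := hhu y my z mz hyz
  have huzy := hhu z mz y my hzy
  have hsxy := hh_sum x mx y my hxy
  have hsxz := hh_sum x mx z mz hxz
  have hsyz := hh_sum y my z mz hyz
  rcases hh01 x mx y my hxy with e1 | e1 <;>
    rcases hh01 x mx z mz hxz with e2 | e2 <;>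
      rcases hh01 y my z mz hyz with e3 | e3
  · -- (0,0,0): z < y < x
    have f1 : h y x = 1 := by linarith
    have f2 : h z x = 1 := by linarith
    have f3 : h z y = 1 := by linarith
    have a2 := huzx f2
    rw [e1, e2, e3, f1, f2, f3]
    linarith [mul_nonneg (by linarith : (0:ℝ) ≤ 2 * u z x - 1) wxz0,
      mul_nonneg uxz0 wzx0]
  · -- (0,0,1): y < z < x
    have f1 : h y x = 1 := by linarith
    have f2 : h z x = 1 := by linarith
    have f3 : h z y = 0 := by linarith
    have a1 := huyx f1
    rw [e1, e2, e3, f1, f2, f3]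
    linarith [mul_nonneg (by linarith : (0:ℝ) ≤ 2 * u y x - 1) wxy0,
      mul_nonneg uxy0 wyx0]
  · -- (0,1,0): cycle y → x → z → y
    have f1 : h y x = 1 := by linarith
    have f2 : h z x = 0 := by linarith
    have f3 : h z y = 1 := by linarith
    have a1 := huyx f1; have a2 := huxz e2; have a3 := huzy f3
    rw [e1, e2, e3, f1, f2, f3]
    have r1 : u y x = 1 - u x y := by linarith
    have r2 : u z y = 1 - u y z := by linarith
    have r3 : u x z = 1 - u z x := by linarith
    rw [r1, r2, r3]
    have A : (0:ℝ) ≤ 1 - 2 * u x y := by linarith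
    have B : (0:ℝ) ≤ 1 - 2 * u y z := by linarith
    have C : (0:ℝ) ≤ 1 - 2 * u z x := by linarith
    have S : (0:ℝ) ≤ 2 * (u x y + u y z + u z x) - 2 := by linarith
    linarith [mul_nonneg A (by linarith : (0:ℝ) ≤ w y z + w z x - w y x),
      mul_nonneg B (by linarith : (0:ℝ) ≤ w z x + w x y - w z y),
      mul_nonneg C (by linarith : (0:ℝ) ≤ w x y + w y z - w x z),
      mul_nonneg S wxy0, mul_nonneg S wyz0, mul_nonneg S wzx0,
      mul_nonneg A wxy0, mul_nonneg B wyz0, mul_nonneg C wzx0]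
  · -- (0,1,1): y < x < z
    have f1 : h y x = 1 := by linarith
    have f2 : h z x = 0 := by linarith
    have f3 : h z y = 0 := by linarith
    have a3 := huyz e3
    rw [e1, e2, e3, f1, f2, f3]
    linarith [mul_nonneg (by linarith : (0:ℝ) ≤ 2 * u y z - 1) wzy0,
      mul_nonneg uzy0 wyz0]
  · -- (1,0,0): z < x < y
    have f1 : h y x = 0 := by linarith
    have f2 : h z x = 1 := by linarith
    have f3 : h z y = 1 := by linarith
    have a3 := huzy f3
    rw [e1, e2, e3, f1, f2, f3]
    linarith [mul_nonneg (by linarith : (0:ℝ) ≤ 2 * u z y - 1) wyz0,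
      mul_nonneg uyz0 wzy0]
  · -- (1,0,1): cycle x → y → z → x
    have f1 : h y x = 0 := by linarith
    have f2 : h z x = 1 := by linarith
    have f3 : h z y = 0 := by linarith
    have a1 := huxy e1; have a2 := huzx f2; have a3 := huyz e3
    rw [e1, e2, e3, f1, f2, f3]
    have r1 : u y x = 1 - u x y := by linarith
    have r2 : u z y = 1 - u y z := by linarith
    have r3 : u x z = 1 - u z x := by linarith
    rw [r1, r2, r3]
    have A : (0:ℝ) ≤ 2 * u x y - 1 := by linarith
    have B : (0:ℝ) ≤ 2 * u y z - 1 := by linarith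
    have C : (0:ℝ) ≤ 2 * u z x - 1 := by linarith
    have S : (0:ℝ) ≤ 4 - 2 * (u x y + u y z + u z x) := by linarith
    linarith [mul_nonneg A (by linarith : (0:ℝ) ≤ w x z + w z y - w x y),
      mul_nonneg B (by linarith : (0:ℝ) ≤ w y x + w x z - w y z),
      mul_nonneg C (by linarith : (0:ℝ) ≤ w z y + w y x - w z x),
      mul_nonneg S wyx0, mul_nonneg S wzy0, mul_nonneg S wxz0,
      mul_nonneg A wyx0, mul_nonneg B wzy0, mul_nonneg C wxz0]
  · -- (1,1,0): x < z < y
    have f1 : h y x = 0 := by linarith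
    have f2 : h z x = 0 := by linarith
    have f3 : h z y = 1 := by linarith
    have a1 := huxy e1
    rw [e1, e2, e3, f1, f2, f3]
    linarith [mul_nonneg (by linarith : (0:ℝ) ≤ 2 * u x y - 1) wyx0,
      mul_nonneg uyx0 wxy0]
  · -- (1,1,1): x < y < z
    have f1 : h y x = 0 := by linarith
    have f2 : h z x = 0 := by linarith
    have f3 : h z y = 0 := by linarith
    have a2 := huxz e2
    rw [e1, e2, e3, f1, f2, f3]
    linarith [mul_nonneg (by linarith : (0:ℝ) ≤ 2 * u x z - 1) wzx0,
      mul_nonneg uzx0 wxz0]
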